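/- arXiv:2403.19239 — 4 statements merged into one kernel-verified Lean document; each statement's English description precedes it below -/
import Mathlib

section
/- For any real-valued random variable Y and any p ∈ [1,2] with E[|Y|^p] < ∞, one has |E[e^{iY} - iY - 1]| ≤ 2^{3-2p} E[|Y|^p]. -/
open MeasureTheory

section Aux
open Complex


lemma exp_I_sub_one_norm (x : ℝ) : ‖Complex.exp (I * x) - 1‖ ≤ |x| := by
  have h : Complex.exp (I * x) - 1 = ((Real.cos x - 1 : ℝ) : ℂ) + (Real.sin x : ℝ) * I := by
    rw [mul_comm, Complex.exp_mul_I]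
    push_cast [← Complex.ofReal_cos, ← Complex.ofReal_sin]
    ring
  rw [h]
  rw [Complex.norm_add_mul_I]
  have h2 : (Real.cos x - 1) ^ 2 + Real.sin x ^ 2 = (2 * Real.sin (x / 2)) ^ 2 := by
    have hc : Real.cos (2 * (x / 2)) = 2 * Real.cos (x / 2) ^ 2 - 1 := Real.cos_two_mul _
    have h1 : Real.sin (x / 2) ^ 2 + Real.cos (x / 2) ^ 2 = 1 := Real.sin_sq_add_cos_sq _
    have h3 : Real.sin x ^ 2 + Real.cos x ^ 2 = 1 := Real.sin_sq_add_cos_sq _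
    have : (2 : ℝ) * (x / 2) = x := by ring
    rw [this] at hc
    nlinarith
  rw [h2, Real.sqrt_sq_eq_abs, abs_mul, _root_.abs_two]
  have := Real.abs_sin_le_abs (x := x / 2)
  rw [abs_div, _root_.abs_two] at this
  nlinarith [abs_nonneg x]

lemma hasDeriv_aux (t : ℝ) : HasDerivAt (fun t : ℝ => Complex.exp (I * t) - I * t - 1)
    (I * (Complex.exp (I * t) - 1)) t := by
  have h0 : HasDerivAt (fun t : ℝ => I * (t : ℂ)) I t := by
    simpa using ((hasDerivAt_id t).ofReal_comp.const_mul I)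
  have := (h0.cexp.sub h0).sub_const 1
  refine this.congr_deriv ?_
  ring

lemma exp_I_taylor2 (x : ℝ) : ‖Complex.exp (I * x) - I * x - 1‖ ≤ x ^ 2 / 2 := by
  -- reduce to x ≥ 0 by conjugation symmetry
  have key : ∀ x : ℝ, 0 ≤ x → ‖Complex.exp (I * x) - I * x - 1‖ ≤ x ^ 2 / 2 := by
    intro x hx
    have hftc : Complex.exp (I * x) - I * x - 1
        = ∫ t in (0:ℝ)..x, I * (Complex.exp (I * t) - 1) := by
      rw [intervalIntegral.integral_eq_sub_of_hasDerivAt (fun t _ => hasDeriv_aux t)]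
      · simp
      · apply Continuous.intervalIntegrable
        continuity
    rw [hftc]
    have hb : ∀ t ∈ Set.Icc (0:ℝ) x, ‖I * (Complex.exp (I * t) - 1)‖ ≤ t := by
      intro t ht
      rw [norm_mul, Complex.norm_I, one_mul]
      calc ‖Complex.exp (I * t) - 1‖ ≤ |t| := exp_I_sub_one_norm t
        _ = t := abs_of_nonneg ht.1
    calc ‖∫ t in (0:ℝ)..x, I * (Complex.exp (I * t) - 1)‖
        ≤ |∫ t in (0:ℝ)..x, t| := by
          apply intervalIntegral.norm_integral_le_abs_of_norm_le
          · filter_upwards [MeasureTheory.ae_restrict_mem measurableSet_uIoc] with t ht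
            rw [Set.uIoc_of_le hx] at ht
            exact hb t ⟨ht.1.le, ht.2⟩
          · exact Continuous.intervalIntegrable (by continuity) _ _
      _ = x ^ 2 / 2 := by
          rw [integral_id, _root_.abs_of_nonneg (by nlinarith)]
          ring
  rcases le_or_gt 0 x with hx | hx
  · exact key x hx
  · have h := key (-x) (by linarith)
    have hcong : Complex.exp (I * (-x:ℝ)) - I * (-x:ℝ) - 1
        = starRingEnd ℂ (Complex.exp (I * x) - I * x - 1) := by
      simp [map_sub, map_mul, ← Complex.exp_conj]
    calc ‖Complex.exp (I * x) - I * x - 1‖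
        = ‖Complex.exp (I * (-x:ℝ)) - I * (-x:ℝ) - 1‖ := by
          rw [hcong, RCLike.norm_conj]
      _ ≤ (-x) ^ 2 / 2 := h
      _ = x ^ 2 / 2 := by ring

lemma pointwise_bound (p : ℝ) (hp1 : 1 ≤ p) (hp2 : p ≤ 2) (x : ℝ) :
    ‖Complex.exp (I * x) - I * x - 1‖ ≤ (2 : ℝ) ^ (3 - 2 * p) * |x| ^ p := by
  rcases eq_or_ne x 0 with rfl | hx0
  · simp [Real.zero_rpow (by linarith : p ≠ 0)]
  have hxpos : (0:ℝ) < |x| := abs_pos.mpr hx0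
  have h24 : ((4:ℝ)) = (2:ℝ) ^ (2:ℝ) := by
    rw [show ((2:ℝ):ℝ) = ((2:ℕ):ℝ) from by norm_num, Real.rpow_natCast]; norm_num
  rcases le_or_gt (|x|) 4 with h4 | h4
  · -- quadratic regime
    calc ‖Complex.exp (I * x) - I * x - 1‖ ≤ x ^ 2 / 2 := exp_I_taylor2 x
      _ = 2⁻¹ * (|x| ^ (p : ℝ) * |x| ^ (2 - p)) := by
          rw [← Real.rpow_add hxpos]
          rw [show p + (2 - p) = ((2:ℕ):ℝ) from by push_cast; ring, Real.rpow_natCast]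
          rw [_root_.sq_abs]; ring
      _ ≤ 2⁻¹ * (|x| ^ (p : ℝ) * 4 ^ (2 - p)) := by
          gcongr 2⁻¹ * (_ * ?_)
          exact Real.rpow_le_rpow hxpos.le h4 (by linarith)
      _ = (2 : ℝ) ^ (3 - 2 * p) * |x| ^ p := by
          have hs : (2:ℝ) ^ (3 - 2 * p) = 2⁻¹ * (2:ℝ) ^ ((2:ℝ) * (2 - p)) := by
            rw [show (3 - 2*p) = (-1) + 2*(2-p) by ring, Real.rpow_add (by norm_num),
              Real.rpow_neg_one]
          rw [h24, ← Real.rpow_mul (by norm_num), hs]; ring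
  · -- linear regime
    calc ‖Complex.exp (I * x) - I * x - 1‖
        ≤ ‖Complex.exp (I * x) - 1‖ + ‖I * (x:ℂ)‖ := by
          have : Complex.exp (I * x) - I * x - 1 = (Complex.exp (I * x) - 1) - I * x := by ring
          rw [this]; exact norm_sub_le _ _
      _ ≤ |x| + |x| := by
          gcongr
          · exact exp_I_sub_one_norm x
          · rw [norm_mul, Complex.norm_I, one_mul, Complex.norm_real, Real.norm_eq_abs]
      _ = 2 * (|x| ^ (p:ℝ) * |x| ^ (1 - p)) := by
          rw [← Real.rpow_add hxpos]
          rw [show p + (1 - p) = ((1:ℕ):ℝ) from by push_cast; ring, Real.rpow_natCast]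
          ring
      _ ≤ 2 * (|x| ^ (p:ℝ) * 4 ^ (1 - p)) := by
          gcongr 2 * (|x| ^ (p:ℝ) * ?_)
          exact Real.rpow_le_rpow_of_nonpos (by norm_num) h4.le (by linarith)
      _ = (2 : ℝ) ^ (3 - 2 * p) * |x| ^ p := by
          have hs : (2:ℝ) ^ (3 - 2 * p) = 2 * (2:ℝ) ^ ((2:ℝ) * (1 - p)) := by
            rw [show (3 - 2*p) = 1 + 2*(1-p) by ring, Real.rpow_add (by norm_num),
              Real.rpow_one]
          rw [h24, ← Real.rpow_mul (by norm_num), hs]; ring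

end Aux

theorem stmt0 {Ω : Type*} [MeasurableSpace Ω] (μ : Measure Ω) [IsProbabilityMeasure μ]
    (Y : Ω → ℝ) (hY : Measurable Y) (p : ℝ) (hp1 : 1 ≤ p) (hp2 : p ≤ 2)
    (hint : Integrable (fun ω => |Y ω| ^ p) μ) :
    ‖∫ ω, (Complex.exp (Complex.I * (Y ω : ℂ)) - Complex.I * (Y ω : ℂ) - 1) ∂μ‖
      ≤ (2 : ℝ) ^ (3 - 2 * p) * ∫ ω, |Y ω| ^ p ∂μ := by
  set f : Ω → ℂ := fun ω => Complex.exp (Complex.I * (Y ω : ℂ)) - Complex.I * (Y ω : ℂ) - 1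
    with hf
  have hC : Integrable (fun ω => (2:ℝ) ^ (3 - 2 * p) * |Y ω| ^ p) μ := hint.const_mul _
  have hmeas : AEStronglyMeasurable f μ := by
    apply Continuous.comp_aestronglyMeasurable (g := fun x : ℝ =>
      Complex.exp (Complex.I * (x : ℂ)) - Complex.I * (x : ℂ) - 1) (by continuity)
      hY.aestronglyMeasurable
  have hb : ∀ ω, ‖f ω‖ ≤ (2:ℝ) ^ (3 - 2 * p) * |Y ω| ^ p := fun ω =>
    pointwise_bound p hp1 hp2 (Y ω)
  have hintf : Integrable f μ :=
    hC.mono hmeas (Filter.Eventually.of_forall fun ω => by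
      rw [Real.norm_eq_abs, _root_.abs_of_nonneg (by positivity)]; exact hb ω)
  calc ‖∫ ω, f ω ∂μ‖ ≤ ∫ ω, ‖f ω‖ ∂μ := norm_integral_le_integral_norm f
    _ ≤ ∫ ω, (2:ℝ) ^ (3 - 2 * p) * |Y ω| ^ p ∂μ :=
        integral_mono hintf.norm hC hb
    _ = (2 : ℝ) ^ (3 - 2 * p) * ∫ ω, |Y ω| ^ p ∂μ := integral_const_mul _ _
end

section
/- For every β ∈ (0,1) and every complex number z with Re z ≥ 0, one has z^β = (β/Γ(1-β)) ∫_0^∞ (1 - e^{-zr}) r^{-(1+β)} dr, where z^β denotes the principal branch of the power function. -/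
open MeasureTheory Set Filter Topology


lemma aux_norm_rpow {t : ℝ} (ht : 0 ≤ t) (a : ℝ) : ‖((t ^ a : ℝ) : ℂ)‖ = t ^ a := by
  rw [Complex.norm_real]; exact abs_of_nonneg (Real.rpow_nonneg ht a)

lemma aux_norm_cexp (z : ℂ) (t : ℝ) : ‖Complex.exp (-(z * t))‖ = Real.exp (-(z.re * t)) := by
  rw [Complex.norm_exp]; norm_num

lemma aux_int_real {a b : ℝ} (ha : -1 < a) (hb : 0 < b) :
    IntegrableOn (fun t : ℝ => Real.exp (-(b * t)) * t ^ a) (Ioi 0) := by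
  have h1 : IntegrableOn (fun x : ℝ => Real.exp (-x) * x ^ a) (Ioi 0) := by
    simpa using Real.GammaIntegral_convergent (show (0:ℝ) < a + 1 by linarith)
  have h2 : IntegrableOn (fun t : ℝ => Real.exp (-(b * t)) * (b * t) ^ a) (Ioi 0) := by
    have := (integrableOn_Ioi_comp_mul_left_iff (fun x : ℝ => Real.exp (-x) * x ^ a) 0 hb).2
    simpa using this (by simpa using h1)
  have hba : b ^ (-a) * b ^ a = 1 := by
    rw [← Real.rpow_add hb]; simp
  refine IntegrableOn.congr_fun (h2.const_mul (b ^ (-a)) : IntegrableOn _ _ _) (fun t ht => ?_) measurableSet_Ioi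
  rw [Real.mul_rpow hb.le (le_of_lt ht),
    show b ^ (-a) * (Real.exp (-(b * t)) * (b ^ a * t ^ a))
      = (b ^ (-a) * b ^ a) * (Real.exp (-(b * t)) * t ^ a) from by ring, hba, one_mul]

lemma aux_aesm (w : ℂ) (a : ℝ) :
    AEStronglyMeasurable (fun t : ℝ => Complex.exp (-(w * t)) * ((t ^ a : ℝ) : ℂ))
      (volume.restrict (Ioi 0)) := by
  apply AEStronglyMeasurable.mul
  · exact (Complex.continuous_exp.comp
      ((continuous_const.mul Complex.continuous_ofReal).neg)).aestronglyMeasurable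
  · exact (Complex.continuous_ofReal.measurable.comp (by fun_prop)).aestronglyMeasurable

lemma intF {β : ℝ} (hβ1 : β < 1) {z : ℂ} (hz : 0 < z.re) :
    IntegrableOn (fun t : ℝ => Complex.exp (-(z * t)) * ((t ^ (-β) : ℝ) : ℂ)) (Ioi 0) := by
  refine Integrable.mono' (aux_int_real (a := -β) (b := z.re) (by linarith) hz)
    (aux_aesm z (-β)) ?_
  filter_upwards [ae_restrict_mem measurableSet_Ioi] with t ht
  rw [norm_mul, aux_norm_cexp, aux_norm_rpow (le_of_lt ht)]

lemma aux_one_sub_exp {w : ℂ} (hw : 0 ≤ w.re) {r : ℝ} (hr : 0 ≤ r) :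
    ‖1 - Complex.exp (-(w * r))‖ ≤ 2 * min ((‖w‖ + 1) * r) 1 := by
  rcases le_total ((‖w‖ + 1) * r) 1 with h | h
  · rw [min_eq_left h]
    have hx : ‖(-(w * r))‖ ≤ 1 := by
      rw [norm_neg, norm_mul, Complex.norm_real, Real.norm_eq_abs, abs_of_nonneg hr]
      calc ‖w‖ * r ≤ (‖w‖ + 1) * r := by
            exact mul_le_mul_of_nonneg_right (by linarith) hr
        _ ≤ 1 := h
    have h2 := Complex.norm_exp_sub_one_le hx
    rw [norm_sub_rev]
    calc ‖(Complex.exp (-(w * r)) - 1)‖ ≤ 2 * ‖(-(w * r))‖ := h2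
      _ ≤ 2 * ((‖w‖ + 1) * r) := by
          rw [norm_neg, norm_mul, Complex.norm_real, Real.norm_eq_abs, abs_of_nonneg hr]
          have : ‖w‖ * r ≤ (‖w‖ + 1) * r := by
            exact mul_le_mul_of_nonneg_right (by linarith) hr
          linarith
  · rw [min_eq_right h]
    calc ‖1 - Complex.exp (-(w * r))‖ ≤ ‖(1:ℂ)‖ + ‖Complex.exp (-(w * r))‖ := norm_sub_le _ _
      _ ≤ 1 + 1 := by
          rw [norm_one, aux_norm_cexp]
          have : Real.exp (-(w.re * r)) ≤ 1 := by
            rw [Real.exp_le_one_iff]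
            simpa using mul_nonneg hw hr
          linarith
      _ = 2 * 1 := by ring

lemma aux_bound_int {β : ℝ} (hβ0 : 0 < β) (hβ1 : β < 1) {c : ℝ} (hc : 0 ≤ c) :
    IntegrableOn (fun r : ℝ => 2 * min (c * r) 1 * r ^ (-(1 + β))) (Ioi 0) := by
  have hmeas : AEStronglyMeasurable (fun r : ℝ => 2 * min (c * r) 1 * r ^ (-(1 + β)))
      (volume.restrict (Ioi (0:ℝ))) := by
    apply Measurable.aestronglyMeasurable; fun_prop
  rw [← Ioc_union_Ioi_eq_Ioi (zero_le_one (α := ℝ))]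
  apply IntegrableOn.union
  · refine Integrable.mono'
      (((intervalIntegral.intervalIntegrable_rpow' (show (-1:ℝ) < -β by linarith)).1).const_mul
        (2 * c)) (hmeas.mono_measure (Measure.restrict_mono Ioc_subset_Ioi_self le_rfl)) ?_
    filter_upwards [ae_restrict_mem measurableSet_Ioc] with r hr
    have hr0 : 0 < r := hr.1
    have hmin : (0:ℝ) ≤ min (c * r) 1 := le_min (mul_nonneg hc hr0.le) zero_le_one
    have hrp : (0:ℝ) ≤ r ^ (-(1 + β)) := Real.rpow_nonneg hr0.le _
    rw [Real.norm_eq_abs, abs_of_nonneg (by positivity)]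
    have h1 : r * r ^ (-(1 + β)) = r ^ (-β) := by
      rw [show -β = 1 + -(1 + β) by ring, Real.rpow_add hr0, Real.rpow_one]
    calc 2 * min (c * r) 1 * r ^ (-(1 + β)) ≤ 2 * (c * r) * r ^ (-(1 + β)) := by
          apply mul_le_mul_of_nonneg_right _ hrp
          exact mul_le_mul_of_nonneg_left (min_le_left _ _) (by norm_num)
      _ = 2 * c * (r * r ^ (-(1 + β))) := by ring
      _ = 2 * c * r ^ (-β) := by rw [h1]
  · refine Integrable.mono'
      ((integrableOn_Ioi_rpow_of_lt (show -(1+β) < -1 by linarith) one_pos).const_mul 2)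
      (hmeas.mono_measure (Measure.restrict_mono (Ioi_subset_Ioi zero_le_one) le_rfl)) ?_
    filter_upwards [ae_restrict_mem measurableSet_Ioi] with r hr
    have hr0 : (0:ℝ) < r := lt_trans one_pos hr
    have hmin : (0:ℝ) ≤ min (c * r) 1 := le_min (mul_nonneg hc hr0.le) zero_le_one
    have hrp : (0:ℝ) ≤ r ^ (-(1 + β)) := Real.rpow_nonneg hr0.le _
    rw [Real.norm_eq_abs, abs_of_nonneg (by positivity)]
    calc 2 * min (c * r) 1 * r ^ (-(1 + β)) ≤ 2 * 1 * r ^ (-(1 + β)) := by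
          apply mul_le_mul_of_nonneg_right _ hrp
          exact mul_le_mul_of_nonneg_left (min_le_right _ _) (by norm_num)
      _ = 2 * r ^ (-(1 + β)) := by ring

lemma aux_aesm_main (β : ℝ) (w : ℂ) :
    AEStronglyMeasurable (fun r : ℝ => (1 - Complex.exp (-(w * r))) * ((r ^ (-(1 + β)) : ℝ) : ℂ))
      (volume.restrict (Ioi 0)) := by
  apply AEStronglyMeasurable.mul
  · exact (continuous_const.sub (Complex.continuous_exp.comp
      ((continuous_const.mul Complex.continuous_ofReal).neg))).aestronglyMeasurable
  · exact (Complex.continuous_ofReal.measurable.comp (by fun_prop)).aestronglyMeasurable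

lemma intMain {β : ℝ} (hβ0 : 0 < β) (hβ1 : β < 1) {w : ℂ} (hw : 0 ≤ w.re) :
    IntegrableOn (fun r : ℝ => (1 - Complex.exp (-(w * r))) * ((r ^ (-(1 + β)) : ℝ) : ℂ))
      (Ioi 0) := by
  refine Integrable.mono' (aux_bound_int hβ0 hβ1 (c := ‖w‖ + 1) (by positivity))
    (aux_aesm_main β w) ?_
  filter_upwards [ae_restrict_mem measurableSet_Ioi] with r hr
  rw [norm_mul, aux_norm_rpow (le_of_lt hr)]
  exact mul_le_mul_of_nonneg_right (aux_one_sub_exp hw hr.le) (Real.rpow_nonneg hr.le _)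



lemma gamma_int {β : ℝ} (hβ0 : 0 < β) (hβ1 : β < 1) {z : ℂ} (hz : 0 < z.re) :
    ∫ t in Ioi (0:ℝ), Complex.exp (-(z * t)) * ((t ^ (-β) : ℝ) : ℂ)
      = (Real.Gamma (1 - β) : ℂ) * z ^ ((β : ℂ) - 1) := by
  set f : ℂ → ℂ := fun w => ∫ t in Ioi (0:ℝ), Complex.exp (-(w * t)) * ((t ^ (-β) : ℝ) : ℂ)
    with hf_def
  set g : ℂ → ℂ := fun w => (Real.Gamma (1 - β) : ℂ) * w ^ ((β : ℂ) - 1) with hg_def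
  set U : Set ℂ := {w | 0 < w.re} with hU_def
  have hUo : IsOpen U := isOpen_lt continuous_const Complex.continuous_re
  -- differentiability of f
  have hf_diff : DifferentiableOn ℂ f U := by
    intro w hw
    have hw' : 0 < w.re := hw
    set ε : ℝ := w.re / 2 with hε_def
    have hε : 0 < ε := by positivity
    have key := hasDerivAt_integral_of_dominated_loc_of_deriv_le (μ := volume.restrict (Ioi 0))
      (F := fun w' (t : ℝ) => Complex.exp (-(w' * t)) * ((t ^ (-β) : ℝ) : ℂ))
      (F' := fun w' (t : ℝ) => (-(t:ℂ)) * (Complex.exp (-(w' * t)) * ((t ^ (-β) : ℝ) : ℂ)))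
      (x₀ := w) (bound := fun t => Real.exp (-(ε * t)) * t ^ (1 - β)) (Metric.ball_mem_nhds w hε)
      (Eventually.of_forall fun w' => aux_aesm w' (-β)) (intF hβ1 hw')
      ((Complex.continuous_ofReal.neg.aestronglyMeasurable).mul (aux_aesm w (-β)))
      ?_ (aux_int_real (by linarith) hε) ?_
    · exact (key.2.differentiableAt).differentiableWithinAt
    · -- bound
      filter_upwards [ae_restrict_mem measurableSet_Ioi] with t ht
      intro w' hw'mem
      have hre : ε ≤ w'.re := by
        have h1 : |(w' - w).re| ≤ ‖w' - w‖ := by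
          exact Complex.abs_re_le_norm _
        have h2 : ‖w' - w‖ < ε := by simpa [Metric.mem_ball, dist_eq_norm] using hw'mem
        have := abs_le.1 h1
        simp only [Complex.sub_re] at this
        have := this.1
        simp only [hε_def] at *
        linarith
      have ht0 : (0:ℝ) < t := ht
      rw [norm_mul, norm_mul, norm_neg, Complex.norm_real, Real.norm_eq_abs, abs_of_nonneg ht0.le,
        aux_norm_cexp, aux_norm_rpow ht0.le]
      have h3 : t * (Real.exp (-(w'.re * t)) * t ^ (-β))
          = Real.exp (-(w'.re * t)) * (t * t ^ (-β)) := by ring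
      rw [h3]
      have h4 : t * t ^ (-β) = t ^ (1 - β) := by
        rw [show (1:ℝ) - β = 1 + -β by ring, Real.rpow_add ht0, Real.rpow_one]
      rw [h4]
      apply mul_le_mul_of_nonneg_right _ (Real.rpow_nonneg ht0.le _)
      apply Real.exp_le_exp.2
      have := mul_le_mul_of_nonneg_right hre ht0.le
      linarith
    · -- derivative
      filter_upwards [ae_restrict_mem measurableSet_Ioi] with t _
      intro w' _
      have h1 : HasDerivAt (fun w' : ℂ => -(w' * (t:ℂ))) (-(t:ℂ)) w' := by
        exact (((hasDerivAt_id w').mul_const (t:ℂ)).neg).congr_deriv (by simp)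
      have h2 := (h1.cexp).mul_const ((t ^ (-β) : ℝ) : ℂ)
      refine h2.congr_deriv ?_
      ring
  -- differentiability of g
  have hg_diff : DifferentiableOn ℂ g U := by
    intro w hw
    have : HasDerivAt (fun w : ℂ => w ^ ((β:ℂ) - 1)) (((β:ℂ)-1) * w ^ ((β:ℂ) - 1 - 1) * 1) w :=
      (hasDerivAt_id w).cpow_const (by exact Complex.mem_slitPlane_iff.2 (Or.inl hw))
    exact ((this.differentiableAt).const_mul _).differentiableWithinAt
  -- equality on positive reals
  have hreal : ∀ x : ℝ, 0 < x → f x = g x := by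
    intro x hx
    have base := Complex.integral_cpow_mul_exp_neg_mul_Ioi
      (a := ((1 - β : ℝ) : ℂ)) (r := x) (by simp; linarith) hx
    have hint : f x = ∫ t in Ioi (0:ℝ), (t:ℂ) ^ (((1 - β : ℝ):ℂ) - 1) * Complex.exp (-(x * t)) := by
      rw [hf_def]
      refine setIntegral_congr_fun measurableSet_Ioi (fun t ht => ?_)
      have ht0 : (0:ℝ) < t := ht
      rw [show ((t ^ (-β) : ℝ) : ℂ) = (t:ℂ) ^ ((-β : ℝ) : ℂ) from Complex.ofReal_cpow ht0.le _]
      rw [show ((-β : ℝ) : ℂ) = ((1 - β : ℝ):ℂ) - 1 by push_cast; ring]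
      rw [mul_comm]
    rw [hint, base, hg_def]
    -- (1/x)^a * Gamma a = Γ * x^(β-1)
    have hgam : Complex.Gamma ((1 - β : ℝ) : ℂ) = ((Real.Gamma (1 - β) : ℝ) : ℂ) :=
      Complex.Gamma_ofReal _
    rw [hgam]
    have hx0 : ((x:ℂ)) ≠ 0 := by exact_mod_cast hx.ne'
    have e1 : (1 / (x:ℂ)) ^ ((1 - β : ℝ):ℂ) * (x:ℂ) ^ ((1 - β : ℝ):ℂ) = 1 := by
      rw [show (1 / (x:ℂ)) = (((1 / x : ℝ)):ℂ) by push_cast; ring]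
      rw [← Complex.mul_cpow_ofReal_nonneg (by positivity) hx.le]
      rw [show ((1 / x : ℝ):ℂ) * (x:ℂ) = (((1/x * x : ℝ)):ℂ) by push_cast; ring]
      rw [one_div, inv_mul_cancel₀ hx.ne']
      norm_num
    have e2 : (x:ℂ) ^ ((β:ℂ) - 1) * (x:ℂ) ^ ((1 - β : ℝ):ℂ) = 1 := by
      rw [← Complex.cpow_add _ _ hx0, show ((β:ℂ) - 1) + ((1 - β : ℝ):ℂ) = 0 by push_cast; ring,
        Complex.cpow_zero]
    have : (1 / (x:ℂ)) ^ ((1 - β : ℝ):ℂ) = (x:ℂ) ^ ((β:ℂ) - 1) := by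
      calc (1 / (x:ℂ)) ^ ((1 - β : ℝ):ℂ)
          = (1 / (x:ℂ)) ^ ((1 - β : ℝ):ℂ) * ((x:ℂ) ^ ((β:ℂ) - 1) * (x:ℂ) ^ ((1 - β : ℝ):ℂ))
            := by rw [e2, mul_one]
        _ = (x:ℂ) ^ ((β:ℂ) - 1) * ((1 / (x:ℂ)) ^ ((1 - β : ℝ):ℂ) * (x:ℂ) ^ ((1 - β : ℝ):ℂ))
            := by ring
        _ = (x:ℂ) ^ ((β:ℂ) - 1) := by rw [e1, mul_one]
    rw [this]; ring
  -- identity theorem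
  have hfreq : ∃ᶠ w in nhdsWithin (1:ℂ) {(1:ℂ)}ᶜ, f w = g w := by
    have hten : Tendsto (fun n : ℕ => (((1 + 1/(n+1) : ℝ)):ℂ)) atTop (nhdsWithin 1 {(1:ℂ)}ᶜ) := by
      apply tendsto_nhdsWithin_of_tendsto_nhds_of_eventually_within
      · have h0 : Tendsto (fun n : ℕ => (1 + 1/(n+1) : ℝ)) atTop (nhds 1) := by
          have := tendsto_one_div_add_atTop_nhds_zero_nat (𝕜 := ℝ)
          simpa using tendsto_const_nhds.add this
        have := (Complex.continuous_ofReal.tendsto (1:ℝ)).comp h0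
        simpa [Function.comp_def, one_div] using this
      · apply Eventually.of_forall
        intro n
        simp only [mem_compl_iff, mem_singleton_iff]
        intro hcon
        have : (1 + 1/(n+1) : ℝ) = 1 := by exact_mod_cast hcon
        have hn : (0:ℝ) < 1/(n+1) := by positivity
        linarith
    apply hten.frequently
    apply Frequently.of_forall
    intro n
    exact hreal _ (by positivity)
  have heq := AnalyticOnNhd.eqOn_of_preconnected_of_frequently_eq
    (hf_diff.analyticOnNhd hUo) (hg_diff.analyticOnNhd hUo)
    ((convex_halfSpace_re_gt 0).isPreconnected) (show (1:ℂ) ∈ U by simp [hU_def]) hfreq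
  exact heq hz


lemma main_pos {β : ℝ} (hβ0 : 0 < β) (hβ1 : β < 1) {z : ℂ} (hz : 0 < z.re) :
    ∫ r in Ioi (0:ℝ), (1 - Complex.exp (-(z * r))) * ((r ^ (-(1 + β)) : ℝ) : ℂ)
      = ((Real.Gamma (1 - β) : ℂ) / β) * z ^ (β : ℂ) := by
  have hβc : ((β:ℝ):ℂ) ≠ 0 := by exact_mod_cast hβ0.ne'
  set f : ℝ → ℂ := fun r => (1 - Complex.exp (-(z * r))) * ((r ^ (-β) : ℝ) : ℂ) * (-(1:ℂ)/β)
    with hf_def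
  set φ : ℝ → ℂ := fun r => (1 - Complex.exp (-(z * r))) * ((r ^ (-(1 + β)) : ℝ) : ℂ)
      - (z/β) * (Complex.exp (-(z * r)) * ((r ^ (-β) : ℝ) : ℂ)) with hφ_def
  have IA := intMain hβ0 hβ1 hz.le
  have IB := intF hβ1 hz
  have hφint : IntegrableOn φ (Ioi 0) := IA.sub (IB.const_mul (z/β))
  -- derivative
  have hderiv : ∀ r ∈ Ioi (0:ℝ), HasDerivAt f (φ r) r := by
    intro r hr
    have hr0 : (0:ℝ) < r := hr
    have hofr : HasDerivAt (fun r : ℝ => ((r:ℝ):ℂ)) 1 r := by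
      exact Complex.ofRealCLM.hasDerivAt (x := r)
    have h1 : HasDerivAt (fun r : ℝ => 1 - Complex.exp (-(z * r)))
        (z * Complex.exp (-(z * r))) r := by
      have ha : HasDerivAt (fun r : ℝ => -(z * ((r:ℝ):ℂ))) (-z) r := by
        exact ((hofr.const_mul z).neg).congr_deriv (by ring)
      have hb := ha.cexp
      have hc := hb.const_sub (1:ℂ)
      refine hc.congr_deriv ?_
      ring
    have h2 : HasDerivAt (fun r : ℝ => (((r:ℝ) ^ (-β) : ℝ) : ℂ)) (((-β * r ^ (-β - 1) : ℝ) : ℂ)) r :=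
      (Real.hasDerivAt_rpow_const (Or.inl hr0.ne')).ofReal_comp
    have h3 := (h1.mul h2).mul_const (-(1:ℂ)/β)
    refine h3.congr_deriv ?_
    have hexp : r ^ (-β - 1) = r ^ (-(1 + β)) := by congr 1; ring
    rw [hφ_def]
    simp only [hexp]
    push_cast
    field_simp
    ring
  -- continuity at 0
  have hf0 : f 0 = 0 := by
    simp [hf_def]
  have hcont : ContinuousWithinAt f (Ici (0:ℝ)) 0 := by
    rw [ContinuousWithinAt, hf0]
    apply squeeze_zero_norm' (a := fun r : ℝ => (2 * (‖z‖ + 1) / β) * r ^ (1 - β))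
    · filter_upwards [self_mem_nhdsWithin] with r (hr : r ∈ Ici (0:ℝ))
      have hr0 : (0:ℝ) ≤ r := hr
      have hE : ‖1 - Complex.exp (-(z * r))‖ ≤ 2 * (‖z‖ + 1) * r := by
        refine le_trans (aux_one_sub_exp hz.le hr0) ?_
        have := min_le_left ((‖z‖ + 1) * r) 1
        nlinarith
      have h4 : r * r ^ (-β) = r ^ (1 - β) := by
        rw [show (1:ℝ) - β = 1 + -β by ring, Real.rpow_add' hr0 (by intro h; linarith), Real.rpow_one]
      rw [hf_def]
      simp only [norm_mul, aux_norm_rpow hr0]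
      have hnc : ‖-(1:ℂ)/(β:ℂ)‖ = 1/β := by
        rw [norm_div, norm_neg, norm_one, Complex.norm_real, Real.norm_eq_abs,
          abs_of_pos hβ0]
      rw [hnc]
      calc ‖1 - Complex.exp (-(z * r))‖ * r ^ (-β) * (1/β)
          ≤ (2 * (‖z‖ + 1) * r) * r ^ (-β) * (1/β) := by
            apply mul_le_mul_of_nonneg_right _ (by positivity)
            exact mul_le_mul_of_nonneg_right hE (Real.rpow_nonneg hr0 _)
        _ = (2 * (‖z‖ + 1) / β) * (r * r ^ (-β)) := by ring
        _ = (2 * (‖z‖ + 1) / β) * r ^ (1 - β) := by rw [h4]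
    · have hc : ContinuousAt (fun r : ℝ => r ^ (1 - β)) 0 :=
        Real.continuousAt_rpow_const 0 (1 - β) (Or.inr (by linarith))
      have h0 : (0:ℝ) ^ (1 - β) = 0 := Real.zero_rpow (by intro h; linarith)
      have := (hc.tendsto.mono_left (nhdsWithin_le_nhds (s := Ici (0:ℝ)))).const_mul
        (2 * (‖z‖ + 1) / β)
      rw [h0, mul_zero] at this
      exact this
  -- tendsto at infinity
  have htop : Tendsto f atTop (nhds 0) := by
    apply squeeze_zero_norm' (a := fun r : ℝ => (2 / β) * r ^ (-β))
    · filter_upwards [eventually_ge_atTop (0:ℝ)] with r hr0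
      have hE : ‖1 - Complex.exp (-(z * r))‖ ≤ 2 := by
        refine le_trans (aux_one_sub_exp hz.le hr0) ?_
        have := min_le_right ((‖z‖ + 1) * r) 1
        linarith
      rw [hf_def]
      simp only [norm_mul, aux_norm_rpow hr0]
      have hnc : ‖-(1:ℂ)/(β:ℂ)‖ = 1/β := by
        rw [norm_div, norm_neg, norm_one, Complex.norm_real, Real.norm_eq_abs,
          abs_of_pos hβ0]
      rw [hnc]
      calc ‖1 - Complex.exp (-(z * r))‖ * r ^ (-β) * (1/β)
          ≤ 2 * r ^ (-β) * (1/β) := by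
            apply mul_le_mul_of_nonneg_right _ (by positivity)
            exact mul_le_mul_of_nonneg_right hE (Real.rpow_nonneg hr0 _)
        _ = (2 / β) * r ^ (-β) := by ring
    · have := (tendsto_rpow_neg_atTop hβ0).const_mul (2 / β)
      simpa using this
  have hFTC := integral_Ioi_of_hasDerivAt_of_tendsto hcont hderiv hφint htop
  rw [hf0, sub_zero] at hFTC
  -- split the integral
  have hsplit : ∫ r in Ioi (0:ℝ), φ r
      = (∫ r in Ioi (0:ℝ), (1 - Complex.exp (-(z * r))) * ((r ^ (-(1 + β)) : ℝ) : ℂ))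
        - (z/β) * ∫ t in Ioi (0:ℝ), Complex.exp (-(z * t)) * ((t ^ (-β) : ℝ) : ℂ) := by
    rw [hφ_def]
    rw [integral_sub IA (IB.const_mul (z/β)), MeasureTheory.integral_const_mul]
  rw [hFTC] at hsplit
  have hz0 : z ≠ 0 := by
    intro h; rw [h] at hz; simp at hz
  have hpow : z * z ^ ((β:ℂ) - 1) = z ^ (β:ℂ) := by
    have := Complex.cpow_add ((β:ℂ) - 1) 1 hz0
    rw [Complex.cpow_one] at this
    rw [show ((β:ℂ) - 1) + 1 = (β:ℂ) by ring] at this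
    rw [this]; ring
  have : (∫ r in Ioi (0:ℝ), (1 - Complex.exp (-(z * r))) * ((r ^ (-(1 + β)) : ℝ) : ℂ))
      = (z/β) * ((Real.Gamma (1 - β) : ℂ) * z ^ ((β : ℂ) - 1)) := by
    rw [← gamma_int hβ0 hβ1 hz]
    linear_combination -hsplit
  rw [this]
  rw [show (z/(β:ℂ)) * ((Real.Gamma (1 - β) : ℂ) * z ^ ((β : ℂ) - 1))
      = ((Real.Gamma (1 - β) : ℂ) / β) * (z * z ^ ((β:ℂ) - 1)) by ring, hpow]


theorem stmt6 (β : ℝ) (hβ0 : 0 < β) (hβ1 : β < 1) (z : ℂ) (hz : 0 ≤ z.re) :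
    z ^ (β : ℂ) = ((β : ℂ) / (Real.Gamma (1 - β) : ℂ)) *
      ∫ r in Ioi (0 : ℝ),
        (1 - Complex.exp (-(z * (r : ℂ)))) * ((r ^ (-(1 + β)) : ℝ) : ℂ) := by
  have hβc : ((β:ℝ):ℂ) ≠ 0 := by exact_mod_cast hβ0.ne'
  have hgam : ((Real.Gamma (1 - β) : ℝ):ℂ) ≠ 0 := by
    exact_mod_cast (Real.Gamma_pos_of_pos (by linarith : (0:ℝ) < 1 - β)).ne'
  rcases eq_or_ne z 0 with rfl | hz0
  · rw [Complex.zero_cpow hβc]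
    have : ∀ r : ℝ, (1 - Complex.exp (-((0:ℂ) * (r : ℂ)))) * ((r ^ (-(1 + β)) : ℝ) : ℂ) = 0 := by
      intro r; simp
    simp only [this, integral_zero, mul_zero]
  · -- z ≠ 0, Re z ≥ 0
    set w : ℕ → ℂ := fun n => z + ((1/(n+1) : ℝ) : ℂ) with hw_def
    have hw_re : ∀ n, 0 < (w n).re := by
      intro n
      have : (0:ℝ) < 1/(n+1) := by positivity
      simp only [hw_def, Complex.add_re, Complex.ofReal_re]
      linarith
    have hw_tendsto : Tendsto w atTop (nhds z) := by
      have h0 : Tendsto (fun n : ℕ => (1/(n+1) : ℝ)) atTop (nhds 0) := by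
        simpa using tendsto_one_div_add_atTop_nhds_zero_nat (𝕜 := ℝ)
      have h1 := (Complex.continuous_ofReal.tendsto (0:ℝ)).comp h0
      have := tendsto_const_nhds (x := z) (f := atTop (α := ℕ)) |>.add h1
      simpa [hw_def, Function.comp_def, one_div] using this
    -- LHS limit
    have hslit : z ∈ Complex.slitPlane := by
      rcases lt_or_eq_of_le hz with h | h
      · exact Complex.mem_slitPlane_iff.2 (Or.inl h)
      · refine Complex.mem_slitPlane_iff.2 (Or.inr ?_)
        intro him
        exact hz0 (Complex.ext (by simp [← h]) him)
    have T1 : Tendsto (fun n => (w n) ^ (β:ℂ)) atTop (nhds (z ^ (β:ℂ))) :=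
      (continuousAt_cpow_const hslit).tendsto.comp hw_tendsto
    -- RHS limit via dominated convergence
    set c : ℝ := ‖z‖ + 2 with hc_def
    have T2 : Tendsto
        (fun n => ∫ r in Ioi (0:ℝ), (1 - Complex.exp (-(w n * r))) * ((r ^ (-(1 + β)) : ℝ) : ℂ))
        atTop
        (nhds (∫ r in Ioi (0:ℝ), (1 - Complex.exp (-(z * r))) * ((r ^ (-(1 + β)) : ℝ) : ℂ))) := by
      apply tendsto_integral_of_dominated_convergence
        (fun r : ℝ => 2 * min (c * r) 1 * r ^ (-(1 + β)))
        (fun n => aux_aesm_main β (w n)) (aux_bound_int hβ0 hβ1 (by positivity))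
      · intro n
        filter_upwards [ae_restrict_mem measurableSet_Ioi] with r hr
        have hr0 : (0:ℝ) < r := hr
        rw [norm_mul, aux_norm_rpow hr0.le]
        have hwn : ‖w n‖ + 1 ≤ c := by
          have h1 : ‖w n‖ ≤ ‖z‖ + ‖((1/(n+1) : ℝ) : ℂ)‖ := norm_add_le _ _
          have h2 : ‖((1/(n+1) : ℝ) : ℂ)‖ ≤ 1 := by
            rw [Complex.norm_real, Real.norm_eq_abs, abs_of_pos (by positivity)]
            rw [div_le_one (by positivity)]
            norm_num
          simp only [hc_def]
          linarith
        have hb1 : ‖1 - Complex.exp (-(w n * r))‖ ≤ 2 * min ((‖w n‖ + 1) * r) 1 :=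
          aux_one_sub_exp (hw_re n).le hr0.le
        have hb2 : min ((‖w n‖ + 1) * r) 1 ≤ min (c * r) 1 :=
          min_le_min (mul_le_mul_of_nonneg_right hwn hr0.le) le_rfl
        have hrp : (0:ℝ) ≤ r ^ (-(1 + β)) := Real.rpow_nonneg hr0.le _
        calc ‖1 - Complex.exp (-(w n * r))‖ * r ^ (-(1 + β))
            ≤ (2 * min (c * r) 1) * r ^ (-(1 + β)) := by
              apply mul_le_mul_of_nonneg_right _ hrp
              refine le_trans hb1 ?_
              linarith
          _ = 2 * min (c * r) 1 * r ^ (-(1 + β)) := by ring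
      · filter_upwards [ae_restrict_mem measurableSet_Ioi] with r _
        have hcont : Tendsto (fun n => Complex.exp (-(w n * r))) atTop
            (nhds (Complex.exp (-(z * r)))) :=
          (Complex.continuous_exp.tendsto _).comp ((hw_tendsto.mul_const ((r:ℝ):ℂ)).neg)
        exact (tendsto_const_nhds.sub hcont).mul_const _
    -- combine
    have heq : ∀ n, (w n) ^ (β:ℂ) = ((β : ℂ) / (Real.Gamma (1 - β) : ℂ)) *
        ∫ r in Ioi (0:ℝ), (1 - Complex.exp (-(w n * r))) * ((r ^ (-(1 + β)) : ℝ) : ℂ) := by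
      intro n
      rw [main_pos hβ0 hβ1 (hw_re n)]
      field_simp
    have T2' : Tendsto (fun n => (w n) ^ (β:ℂ)) atTop
        (nhds (((β : ℂ) / (Real.Gamma (1 - β) : ℂ)) *
          ∫ r in Ioi (0:ℝ), (1 - Complex.exp (-(z * r))) * ((r ^ (-(1 + β)) : ℝ) : ℂ))) := by
      have := T2.const_mul ((β : ℂ) / (Real.Gamma (1 - β) : ℂ))
      refine this.congr (fun n => (heq n).symm)
    exact tendsto_nhds_unique T1 T2'
end

section
/- For every β ∈ (0,1] and all complex numbers z₁, z₂ with Re z₁ ≥ 0 and Re z₂ ≥ 0, one has |z₁^{1+β} - z₂^{1+β}| ≤ (1+β)(|z₁|^β + |z₂|^β)|z₁ - z₂|. -/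
open Complex Set

lemma deriv_at_zero (β : ℝ) (hβ0 : 0 < β) (s : Set ℂ) :
    HasDerivWithinAt (fun w : ℂ => w ^ ((1 + β : ℝ) : ℂ))
      (((1 + β : ℝ) : ℂ) * (0 : ℂ) ^ ((β : ℝ) : ℂ)) s 0 := by
  rw [hasDerivWithinAt_iff_tendsto_slope]
  have h0 : ((0 : ℂ)) ^ ((β : ℝ) : ℂ) = 0 := by
    rw [Complex.zero_cpow]
    simp [Complex.ext_iff, hβ0.ne']
  rw [h0, mul_zero]
  rw [Metric.tendsto_nhdsWithin_nhds]
  intro ε hε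
  refine ⟨min 1 (ε ^ (1 / β)), lt_min one_pos (Real.rpow_pos_of_pos hε _), fun w hw hd => ?_⟩
  have hw0 : w ≠ 0 := by simpa using hw.2
  have hslope : slope (fun w : ℂ => w ^ ((1 + β : ℝ) : ℂ)) 0 w = w ^ ((β : ℝ) : ℂ) := by
    simp only [slope_def_field]
    rw [Complex.zero_cpow (by simp [Complex.ext_iff]; positivity), sub_zero, sub_zero]
    have : ((1 + β : ℝ) : ℂ) = 1 + (β : ℂ) := by push_cast; ring
    rw [this, Complex.cpow_add _ _ hw0, Complex.cpow_one]
    field_simp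
  rw [dist_zero_right] at hd
  rw [hslope, dist_zero_right]
  have hlt2 : ‖w‖ < ε ^ (1 / β) := lt_of_lt_of_le hd (min_le_right _ _)
  have : ‖w ^ ((β : ℝ) : ℂ)‖ = ‖w‖ ^ β := by
    rw [Complex.norm_cpow_real]
  rw [this]
  calc ‖w‖ ^ β < (ε ^ (1 / β)) ^ β :=
        Real.rpow_lt_rpow (norm_nonneg _) hlt2 hβ0
    _ = ε := by rw [← Real.rpow_mul hε.le]; field_simp; rw [Real.rpow_one]

theorem stmt7 (β : ℝ) (hβ0 : 0 < β) (hβ1 : β ≤ 1) (z₁ z₂ : ℂ)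
    (h₁ : 0 ≤ z₁.re) (h₂ : 0 ≤ z₂.re) :
    ‖z₁ ^ ((1 + β : ℝ) : ℂ) - z₂ ^ ((1 + β : ℝ) : ℂ)‖
      ≤ (1 + β) * (‖z₁‖ ^ β + ‖z₂‖ ^ β) * ‖z₁ - z₂‖ := by
  set s := segment ℝ z₂ z₁ with hs
  have hconv : Convex ℝ s := convex_segment _ _
  have hsub : ∀ z ∈ s, 0 ≤ z.re := by
    intro z hz
    obtain ⟨a, b, ha, hb, hab, rfl⟩ := hz
    simp only [Complex.add_re, Complex.smul_re]
    positivity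
  set f : ℂ → ℂ := fun w => w ^ ((1 + β : ℝ) : ℂ) with hf
  set f' : ℂ → ℂ := fun w => ((1 + β : ℝ) : ℂ) * w ^ ((β : ℝ) : ℂ) with hf'
  have hderiv : ∀ z ∈ s, HasDerivWithinAt f (f' z) s z := by
    intro z hz
    rcases eq_or_ne z 0 with rfl | hz0
    · exact deriv_at_zero β hβ0 s
    · have hslit : z ∈ Complex.slitPlane := by
        rcases lt_or_eq_of_le (hsub z hz) with h | h
        · exact Or.inl h
        · refine Or.inr fun him => hz0 (Complex.ext h.symm ?_)
          · simpa using him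
      have := (Complex.hasStrictDerivAt_cpow_const (c := ((1 + β : ℝ) : ℂ)) hslit).hasDerivAt
      have heq : ((1 + β : ℝ) : ℂ) - 1 = ((β : ℝ) : ℂ) := by push_cast; ring
      rw [heq] at this
      exact this.hasDerivWithinAt
  have hbound : ∀ z ∈ s, ‖f' z‖ ≤ (1 + β) * (‖z₁‖ ^ β + ‖z₂‖ ^ β) := by
    intro z hz
    have hznorm : ‖z‖ ≤ max ‖z₂‖ ‖z₁‖ := by
      obtain ⟨a, b, ha, hb, hab, rfl⟩ := hz
      calc ‖a • z₂ + b • z₁‖ ≤ a * ‖z₂‖ + b * ‖z₁‖ := by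
            refine (norm_add_le _ _).trans ?_
            simp [norm_smul, _root_.abs_of_nonneg ha, _root_.abs_of_nonneg hb]
        _ ≤ a * max ‖z₂‖ ‖z₁‖ + b * max ‖z₂‖ ‖z₁‖ := by
            gcongr
            exacts [le_max_left _ _, le_max_right _ _]
        _ = max ‖z₂‖ ‖z₁‖ := by rw [← add_mul, hab, one_mul]
    have : ‖f' z‖ = (1 + β) * ‖z‖ ^ β := by
      simp only [hf', norm_mul, Complex.norm_cpow_real,
        Complex.norm_real, Real.norm_eq_abs]
      rw [_root_.abs_of_pos (show (0:ℝ) < 1 + β by positivity)]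
    rw [this]
    have h1 : ‖z‖ ^ β ≤ (max ‖z₂‖ ‖z₁‖) ^ β :=
      Real.rpow_le_rpow (norm_nonneg _) hznorm hβ0.le
    have h2 : (max ‖z₂‖ ‖z₁‖) ^ β ≤ ‖z₁‖ ^ β + ‖z₂‖ ^ β := by
      rcases max_cases ‖z₂‖ ‖z₁‖ with ⟨h, _⟩ | ⟨h, _⟩ <;> rw [h] <;>
        [skip; skip] <;>
        nlinarith [Real.rpow_nonneg (norm_nonneg z₁) β, Real.rpow_nonneg (norm_nonneg z₂) β]
    have hn : 0 ≤ ‖z‖ ^ β := Real.rpow_nonneg (norm_nonneg _) _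
    nlinarith [h1.trans h2]
  have := hconv.norm_image_sub_le_of_norm_hasDerivWithin_le hderiv hbound
    (left_mem_segment ℝ z₂ z₁) (right_mem_segment ℝ z₂ z₁)
  simpa [hf] using this
end

section
/- With ψ₀ and the hypotheses of the stable-tail comparison (condition (A2): |π̄(r) - A₁ r^{-(1+β)}| ≤ c r^{-(1+β+δ)} for large r, with 0 < β < β+δ < 1), for every η ∈ (0, β] there is a constant C > 0 such that |ψ₀(z)| ≤ C(|z|² + |z|^{1+η}) for all complex z with Re z ≥ 0. -/
open MeasureTheory Set

lemma nb1 (w : ℂ) (hw : 0 ≤ w.re) : ‖1 - Complex.exp (-w)‖ ≤ ‖w‖ := by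
  have hder : ∀ t ∈ Icc (0:ℝ) 1, HasDerivWithinAt (fun t : ℝ => Complex.exp (-(↑t * w)))
      (Complex.exp (-(↑t * w)) * (-w)) (Icc 0 1) t := by
    intro t _
    exact ((((hasDerivAt_mul_const w).comp_ofReal).neg).cexp).hasDerivWithinAt
  have hbound : ∀ t ∈ Icc (0:ℝ) 1, ‖Complex.exp (-(↑t * w)) * (-w)‖ ≤ ‖w‖ := by
    intro t ht
    rw [norm_mul, norm_neg, Complex.norm_exp]
    have : (-(↑t * w)).re = -(t * w.re) := by simp
    rw [this]
    have h1 : Real.exp (-(t * w.re)) ≤ 1 := by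
      rw [Real.exp_le_one_iff]
      have := mul_nonneg ht.1 hw
      linarith
    nlinarith [norm_nonneg w, Real.exp_pos (-(t * w.re))]
  have key := (convex_Icc (0:ℝ) 1).norm_image_sub_le_of_norm_hasDerivWithin_le
    hder hbound (left_mem_Icc.2 zero_le_one) (right_mem_Icc.2 zero_le_one)
  simp only [Complex.ofReal_one, Complex.ofReal_zero, one_mul, zero_mul, neg_zero,
    Complex.exp_zero, sub_zero, norm_one, mul_one] at key
  rw [norm_sub_rev]
  exact key

lemma nb2 (w : ℂ) (hw : 0 ≤ w.re) : ‖1 - Complex.exp (-w)‖ ≤ 2 := by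
  calc ‖1 - Complex.exp (-w)‖ ≤ ‖(1:ℂ)‖ + ‖Complex.exp (-w)‖ := norm_sub_le _ _
  _ ≤ 1 + 1 := by
      gcongr
      · simp
      · rw [Complex.norm_exp, Real.exp_le_one_iff]
        simp [hw]
  _ = 2 := by norm_num

set_option maxHeartbeats 1000000 in
theorem stmt10 (b : ℝ) (hb : 0 ≤ b) (π : Measure ℝ) (hsupp : π (Iic 0) = 0)
    (hfin : ∫⁻ y, ENNReal.ofReal (min y (y ^ 2)) ∂π < ⊤)
    (ψ₀ : ℂ → ℂ)
    (hψ₀ : ∀ z : ℂ, 0 ≤ z.re → ψ₀ z = (b : ℂ) * z ^ 2 +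
      z * ∫ r in Ioi (0 : ℝ),
        (1 - Complex.exp (-(z * (r : ℂ)))) * ((π (Ioi r)).toReal : ℂ))
    (β δ A₁ c M : ℝ) (hβ : 0 < β) (hδ : 0 < δ) (hβδ : β + δ < 1)
    (hA₁ : 0 < A₁) (hc : 0 ≤ c) (hM : 1 ≤ M)
    (htail : ∀ r, M ≤ r →
      |(π (Ioi r)).toReal - A₁ * r ^ (-(1 + β))| ≤ c * r ^ (-(1 + β + δ))) :
    ∀ η : ℝ, 0 < η → η ≤ β → ∃ C : ℝ, 0 < C ∧
      ∀ z : ℂ, 0 ≤ z.re → ‖ψ₀ z‖ ≤ C * (‖z‖ ^ 2 + ‖z‖ ^ (1 + η)) := by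
  intro η hη hηβ
  have h1β : 0 < 1 - β := by linarith
  -- a.e. positivity
  have hae : ∀ᵐ y ∂π, 0 < y := by
    rw [ae_iff]
    have : {y : ℝ | ¬ 0 < y} = Iic 0 := by ext y; simp
    rw [this, hsupp]
  -- finiteness of tails
  have Nfin : ∀ a : ℝ, 0 < a → π (Ioi a) ≠ ⊤ := by
    intro a ha
    have hmin : 0 < min a (a ^ 2) := lt_min ha (by positivity)
    have hmble : AEMeasurable (fun y : ℝ => ENNReal.ofReal (min y (y ^ 2))) π :=
      ((measurable_id.min (measurable_id.pow_const 2)).ennreal_ofReal).aemeasurable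
    have h := mul_meas_ge_le_lintegral₀ hmble (ENNReal.ofReal (min a (a ^ 2)))
    have hsub : Ioi a ⊆ {x : ℝ |
        ENNReal.ofReal (min a (a ^ 2)) ≤ ENNReal.ofReal (min x (x ^ 2))} := by
      intro x hx
      simp only [mem_setOf_eq]
      apply ENNReal.ofReal_le_ofReal
      have hax : a ≤ x := le_of_lt hx
      have h2 : a ^ 2 ≤ x ^ 2 := by nlinarith
      exact le_min ((min_le_left _ _).trans hax) ((min_le_right _ _).trans h2)
    intro hcon
    have h2 : π {x : ℝ |
        ENNReal.ofReal (min a (a ^ 2)) ≤ ENNReal.ofReal (min x (x ^ 2))} = ⊤ :=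
      top_le_iff.mp (hcon ▸ measure_mono hsub)
    rw [h2, ENNReal.mul_top (by simp [hmin.not_ge, ha, ha.ne'] : ENNReal.ofReal (min a (a ^ 2)) ≠ 0)] at h
    exact absurd (lt_of_le_of_lt h hfin) (lt_irrefl _)
  -- antitone tail function bound
  have Nbar_le : ∀ a r : ℝ, 0 < a → a ≤ r →
      (π (Ioi r)).toReal ≤ (π (Ioi a)).toReal := by
    intro a r ha har
    exact ENNReal.toReal_mono (Nfin a ha) (measure_mono (Ioi_subset_Ioi har))
  -- tail estimate
  have tailbd : ∀ r : ℝ, M ≤ r → (π (Ioi r)).toReal ≤ (A₁ + c) * r ^ (-(1 + β)) := by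
    intro r hr
    have h1r : (1:ℝ) ≤ r := hM.trans hr
    have h := abs_le.1 (htail r hr)
    have h2 : r ^ (-(1 + β + δ)) ≤ r ^ (-(1 + β)) :=
      Real.rpow_le_rpow_of_exponent_le h1r (by linarith)
    nlinarith [Real.rpow_nonneg (le_trans zero_le_one h1r) (-(1 + β))]
  -- the small-scale integral bound (layer cake)
  have Jbound : ∫⁻ r in Ioc (0:ℝ) 1, ENNReal.ofReal r * π (Ioi r) ≤
      ∫⁻ y, ENNReal.ofReal (min y (y ^ 2)) ∂π := by
    have f_nn : 0 ≤ᵐ[π] fun y : ℝ => min y 1 := by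
      filter_upwards [hae] with y hy
      exact le_min hy.le zero_le_one
    have f_mble : AEMeasurable (fun y : ℝ => min y 1) π :=
      (measurable_id.min measurable_const).aemeasurable
    have g_intble : ∀ t > (0:ℝ), IntervalIntegrable (fun t : ℝ => t) volume 0 t :=
      fun t _ => intervalIntegral.intervalIntegrable_id
    have g_nn : ∀ᵐ t ∂(volume.restrict (Ioi (0:ℝ))), 0 ≤ t := by
      filter_upwards [ae_restrict_mem measurableSet_Ioi] with t ht
      exact le_of_lt ht
    have layer := lintegral_comp_eq_lintegral_meas_le_mul π f_nn f_mble g_intble g_nn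
    calc ∫⁻ r in Ioc (0:ℝ) 1, ENNReal.ofReal r * π (Ioi r)
        ≤ ∫⁻ r in Ioc (0:ℝ) 1, π {y : ℝ | r ≤ min y 1} * ENNReal.ofReal r := by
          refine lintegral_mono_ae ?_
          filter_upwards [ae_restrict_mem measurableSet_Ioc] with r hr
          rw [mul_comm]
          refine mul_le_mul_left (measure_mono fun y hy => ?_) _
          exact le_min (le_of_lt hy) hr.2
      _ ≤ ∫⁻ r in Ioi (0:ℝ), π {y : ℝ | r ≤ min y 1} * ENNReal.ofReal r :=
          lintegral_mono' (Measure.restrict_mono Ioc_subset_Ioi_self le_rfl) le_rfl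
      _ = ∫⁻ y, ENNReal.ofReal (∫ t in (0:ℝ)..(min y 1), t) ∂π := layer.symm
      _ ≤ ∫⁻ y, ENNReal.ofReal (min y (y ^ 2)) ∂π := by
          refine lintegral_mono_ae ?_
          filter_upwards [hae] with y hy
          rw [integral_id]
          apply ENNReal.ofReal_le_ofReal
          rcases le_total y 1 with h | h
          · rw [min_eq_left h, min_eq_right (by nlinarith : y ^ 2 ≤ y)]
            nlinarith
          · rw [min_eq_right h, min_eq_left (by nlinarith : y ≤ y ^ 2)]
            nlinarith
  -- constants
  set K : ℝ := (∫⁻ y, ENNReal.ofReal (min y (y ^ 2)) ∂π).toReal with hK_def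
  set P : ℝ := (π (Ioi 1)).toReal with hP_def
  have hK0 : 0 ≤ K := ENNReal.toReal_nonneg
  have hP0 : 0 ≤ P := ENNReal.toReal_nonneg
  have hAc : 0 ≤ A₁ + c := by linarith
  have hM0 : (0:ℝ) < M := by linarith
  have hMβ : 0 ≤ M ^ (1 - β) := Real.rpow_nonneg hM0.le _
  have hdiv1 : 0 ≤ (A₁ + c) / (1 - β) := div_nonneg hAc h1β.le
  have hdiv2 : 0 ≤ 2 * (A₁ + c) / β := div_nonneg (by linarith) hβ.le
  have hc3 : 0 ≤ (A₁ + c) * M ^ (1 - β) / (1 - β) :=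
    div_nonneg (mul_nonneg hAc hMβ) h1β.le
  have hmpm : 0 ≤ M * P * M := by positivity
  set C : ℝ := b + K + M * P * M + (A₁ + c) * M ^ (1 - β) / (1 - β)
      + (A₁ + c) / (1 - β) + 2 * (A₁ + c) / β + 1 with hC_def
  have hC : 0 < C := by rw [hC_def]; linarith
  refine ⟨C, hC, ?_⟩
  intro z hz
  rcases eq_or_ne z 0 with rfl | hz0
  · rw [hψ₀ 0 (by simp)]
    simp only [norm_zero]
    rw [Real.zero_rpow (by linarith : (1:ℝ) + η ≠ 0)]
    simp
  · have hs : 0 < ‖z‖ := norm_pos_iff.mpr hz0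
    set s : ℝ := ‖z‖ with hs_def
    set T : ℝ := max M (1 / s) with hT_def
    have hTM : M ≤ T := le_max_left _ _
    have hTs : 1 / s ≤ T := le_max_right _ _
    have hT1 : (1:ℝ) ≤ T := hM.trans hTM
    have hT0 : (0:ℝ) < T := by linarith
    have hFnorm : ∀ r : ℝ,
        ‖(1 - Complex.exp (-(z * (r:ℂ)))) * ((π (Ioi r)).toReal : ℂ)‖
          = ‖1 - Complex.exp (-(z * (r:ℂ)))‖ * (π (Ioi r)).toReal := by
      intro r
      rw [norm_mul, Complex.norm_real, Real.norm_of_nonneg ENNReal.toReal_nonneg]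
    have hzr : ∀ r : ℝ, 0 ≤ r → 0 ≤ (z * (r:ℂ)).re := by
      intro r hr
      simp only [Complex.mul_re, Complex.ofReal_re, Complex.ofReal_im, mul_zero, sub_zero]
      exact mul_nonneg hz hr
    have hbl : ∀ r : ℝ, 0 ≤ r → ‖1 - Complex.exp (-(z * (r:ℂ)))‖ ≤ s * r := by
      intro r hr
      refine (nb1 _ (hzr r hr)).trans ?_
      rw [norm_mul, Complex.norm_real, Real.norm_of_nonneg hr]
    have hbl2 : ∀ r : ℝ, 0 ≤ r → ‖1 - Complex.exp (-(z * (r:ℂ)))‖ ≤ 2 :=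
      fun r hr => nb2 _ (hzr r hr)
    -- term bounds
    have hL1 : ∫⁻ r in Ioc (0:ℝ) 1,
        ENNReal.ofReal ‖(1 - Complex.exp (-(z * (r:ℂ)))) * ((π (Ioi r)).toReal : ℂ)‖
        ≤ ENNReal.ofReal (s * K) := by
      calc ∫⁻ r in Ioc (0:ℝ) 1,
          ENNReal.ofReal ‖(1 - Complex.exp (-(z * (r:ℂ)))) * ((π (Ioi r)).toReal : ℂ)‖
          ≤ ∫⁻ r in Ioc (0:ℝ) 1, ENNReal.ofReal s * (ENNReal.ofReal r * π (Ioi r)) := by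
            refine lintegral_mono_ae ?_
            filter_upwards [ae_restrict_mem measurableSet_Ioc] with r hr
            rw [hFnorm r, ENNReal.ofReal_mul (norm_nonneg _)]
            calc ENNReal.ofReal ‖1 - Complex.exp (-(z * (r:ℂ)))‖
                  * ENNReal.ofReal (π (Ioi r)).toReal
                ≤ ENNReal.ofReal (s * r) * π (Ioi r) :=
                  mul_le_mul' (ENNReal.ofReal_le_ofReal (hbl r hr.1.le))
                    ENNReal.ofReal_toReal_le
              _ = ENNReal.ofReal s * (ENNReal.ofReal r * π (Ioi r)) := by
                  rw [ENNReal.ofReal_mul hs.le, mul_assoc]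
        _ = ENNReal.ofReal s * ∫⁻ r in Ioc (0:ℝ) 1, ENNReal.ofReal r * π (Ioi r) :=
            lintegral_const_mul' _ _ ENNReal.ofReal_ne_top
        _ ≤ ENNReal.ofReal s * ∫⁻ y, ENNReal.ofReal (min y (y ^ 2)) ∂π :=
            mul_le_mul_right Jbound _
        _ = ENNReal.ofReal (s * K) := by
            rw [ENNReal.ofReal_mul hs.le, hK_def, ENNReal.ofReal_toReal hfin.ne]
    have hL2 : ∫⁻ r in Ioc (1:ℝ) M,
        ENNReal.ofReal ‖(1 - Complex.exp (-(z * (r:ℂ)))) * ((π (Ioi r)).toReal : ℂ)‖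
        ≤ ENNReal.ofReal (s * (M * P * M)) := by
      calc ∫⁻ r in Ioc (1:ℝ) M,
          ENNReal.ofReal ‖(1 - Complex.exp (-(z * (r:ℂ)))) * ((π (Ioi r)).toReal : ℂ)‖
          ≤ ∫⁻ _ in Ioc (1:ℝ) M, ENNReal.ofReal (s * M * P) := by
            refine lintegral_mono_ae ?_
            filter_upwards [ae_restrict_mem measurableSet_Ioc] with r hr
            refine ENNReal.ofReal_le_ofReal ?_
            rw [hFnorm r]
            have h1 : ‖1 - Complex.exp (-(z * (r:ℂ)))‖ ≤ s * M :=
              (hbl r (by linarith [hr.1])).trans (by nlinarith [hr.1, hr.2])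
            have h2 : (π (Ioi r)).toReal ≤ P := Nbar_le 1 r one_pos hr.1.le
            exact mul_le_mul h1 h2 ENNReal.toReal_nonneg (by positivity)
        _ = ENNReal.ofReal (s * M * P) * volume (Ioc (1:ℝ) M) := setLIntegral_const _ _
        _ ≤ ENNReal.ofReal (s * M * P) * ENNReal.ofReal M := by
            rw [Real.volume_Ioc]
            exact mul_le_mul_right (ENNReal.ofReal_le_ofReal (by linarith)) _
        _ = ENNReal.ofReal (s * (M * P * M)) := by
            rw [← ENNReal.ofReal_mul (by positivity)]
            ring_nf
    have hL3 : ∫⁻ r in Ioc M T,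
        ENNReal.ofReal ‖(1 - Complex.exp (-(z * (r:ℂ)))) * ((π (Ioi r)).toReal : ℂ)‖
        ≤ ENNReal.ofReal (s * (A₁ + c) * (T ^ (1 - β) / (1 - β))) := by
      have hint : Integrable (fun r : ℝ => s * (A₁ + c) * r ^ (-β))
          (volume.restrict (Ioc M T)) :=
        ((intervalIntegral.intervalIntegrable_rpow' (by linarith : (-1:ℝ) < -β)).1).const_mul _
      calc ∫⁻ r in Ioc M T,
          ENNReal.ofReal ‖(1 - Complex.exp (-(z * (r:ℂ)))) * ((π (Ioi r)).toReal : ℂ)‖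
          ≤ ∫⁻ r in Ioc M T, ENNReal.ofReal (s * (A₁ + c) * r ^ (-β)) := by
            refine lintegral_mono_ae ?_
            filter_upwards [ae_restrict_mem measurableSet_Ioc] with r hr
            refine ENNReal.ofReal_le_ofReal ?_
            rw [hFnorm r]
            have hr0 : (0:ℝ) < r := lt_of_le_of_lt hM0.le hr.1
            have hrr : r * r ^ (-(1 + β)) = r ^ (-β) := by
              nth_rewrite 1 [← Real.rpow_one r]
              rw [← Real.rpow_add hr0]
              congr 1; ring
            calc ‖1 - Complex.exp (-(z * (r:ℂ)))‖ * (π (Ioi r)).toReal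
                ≤ (s * r) * ((A₁ + c) * r ^ (-(1 + β))) :=
                  mul_le_mul (hbl r hr0.le) (tailbd r hr.1.le) ENNReal.toReal_nonneg
                    (by positivity)
              _ = s * (A₁ + c) * (r * r ^ (-(1 + β))) := by ring
              _ = s * (A₁ + c) * r ^ (-β) := by rw [hrr]
        _ = ENNReal.ofReal (∫ r in Ioc M T, s * (A₁ + c) * r ^ (-β)) := by
            refine (ofReal_integral_eq_lintegral_ofReal hint ?_).symm
            filter_upwards [ae_restrict_mem measurableSet_Ioc] with r hr
            have hr0 : (0:ℝ) < r := lt_of_le_of_lt hM0.le hr.1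
            positivity
        _ ≤ ENNReal.ofReal (s * (A₁ + c) * (T ^ (1 - β) / (1 - β))) := by
            refine ENNReal.ofReal_le_ofReal ?_
            rw [MeasureTheory.integral_const_mul]
            have hval : ∫ r in Ioc M T, r ^ (-β)
                = (T ^ (-β + 1) - M ^ (-β + 1)) / (-β + 1) := by
              rw [← intervalIntegral.integral_of_le hTM]
              exact integral_rpow (Or.inl (by linarith))
            rw [hval]
            have hMβ' : 0 ≤ M ^ (-β + 1) := Real.rpow_nonneg hM0.le _
            have h1 : (T ^ (-β + 1) - M ^ (-β + 1)) / (-β + 1) ≤ T ^ (1 - β) / (1 - β) := by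
              rw [show -β + 1 = 1 - β by ring]
              have hMβ2 : 0 ≤ M ^ (1 - β) := Real.rpow_nonneg hM0.le _
              have h2 : T ^ (1 - β) - M ^ (1 - β) ≤ T ^ (1 - β) := by linarith
              exact (div_le_div_iff_of_pos_right h1β).mpr h2
            exact mul_le_mul_of_nonneg_left h1 (by positivity)
    have hL4 : ∫⁻ r in Ioi T,
        ENNReal.ofReal ‖(1 - Complex.exp (-(z * (r:ℂ)))) * ((π (Ioi r)).toReal : ℂ)‖
        ≤ ENNReal.ofReal (2 * (A₁ + c) * (T ^ (-β) / β)) := by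
      have hint : Integrable (fun r : ℝ => 2 * (A₁ + c) * r ^ (-(1 + β)))
          (volume.restrict (Ioi T)) :=
        (integrableOn_Ioi_rpow_of_lt (by linarith : -(1 + β) < -1) hT0).const_mul _
      calc ∫⁻ r in Ioi T,
          ENNReal.ofReal ‖(1 - Complex.exp (-(z * (r:ℂ)))) * ((π (Ioi r)).toReal : ℂ)‖
          ≤ ∫⁻ r in Ioi T, ENNReal.ofReal (2 * (A₁ + c) * r ^ (-(1 + β))) := by
            refine lintegral_mono_ae ?_
            filter_upwards [ae_restrict_mem measurableSet_Ioi] with r hr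
            refine ENNReal.ofReal_le_ofReal ?_
            rw [hFnorm r]
            have hrM : M ≤ r := hTM.trans hr.le
            have hr0 : (0:ℝ) < r := lt_of_lt_of_le hM0 hrM
            calc ‖1 - Complex.exp (-(z * (r:ℂ)))‖ * (π (Ioi r)).toReal
                ≤ 2 * ((A₁ + c) * r ^ (-(1 + β))) :=
                  mul_le_mul (hbl2 r hr0.le) (tailbd r hrM) ENNReal.toReal_nonneg
                    (by norm_num)
              _ = 2 * (A₁ + c) * r ^ (-(1 + β)) := by ring
        _ = ENNReal.ofReal (∫ r in Ioi T, 2 * (A₁ + c) * r ^ (-(1 + β))) := by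
            refine (ofReal_integral_eq_lintegral_ofReal hint ?_).symm
            filter_upwards [ae_restrict_mem measurableSet_Ioi] with r hr
            have hr0 : (0:ℝ) < r := lt_trans hT0 hr
            positivity
        _ ≤ ENNReal.ofReal (2 * (A₁ + c) * (T ^ (-β) / β)) := by
            refine ENNReal.ofReal_le_ofReal ?_
            rw [MeasureTheory.integral_const_mul, integral_Ioi_rpow_of_lt (by linarith) hT0]
            rw [show -(1 + β) + 1 = -β by ring, neg_div_neg_eq]
    -- combine
    have hq1 : 0 ≤ s * K := mul_nonneg hs.le hK0
    have hq2 : 0 ≤ s * (M * P * M) := mul_nonneg hs.le hmpm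
    have hq3 : 0 ≤ s * (A₁ + c) * (T ^ (1 - β) / (1 - β)) :=
      mul_nonneg (mul_nonneg hs.le hAc) (div_nonneg (Real.rpow_nonneg hT0.le _) h1β.le)
    have hq4 : 0 ≤ 2 * (A₁ + c) * (T ^ (-β) / β) :=
      mul_nonneg (by linarith) (div_nonneg (Real.rpow_nonneg hT0.le _) hβ.le)
    set R : ℝ := s * K + s * (M * P * M) + s * (A₁ + c) * (T ^ (1 - β) / (1 - β))
        + 2 * (A₁ + c) * (T ^ (-β) / β) with hR_def
    have hR0 : 0 ≤ R := by rw [hR_def]; linarith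
    have hLtot : ∫⁻ r in Ioi (0:ℝ),
        ENNReal.ofReal ‖(1 - Complex.exp (-(z * (r:ℂ)))) * ((π (Ioi r)).toReal : ℂ)‖
        ≤ ENNReal.ofReal R := by
      have e0 : Ioi (0:ℝ) = Ioc 0 T ∪ Ioi T :=
        (Ioc_union_Ioi_eq_Ioi (by linarith : (0:ℝ) ≤ T)).symm
      have e1 : Ioc (0:ℝ) T = Ioc 0 1 ∪ Ioc 1 T :=
        (Ioc_union_Ioc_eq_Ioc zero_le_one hT1).symm
      have e2 : Ioc (1:ℝ) T = Ioc 1 M ∪ Ioc M T :=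
        (Ioc_union_Ioc_eq_Ioc hM hTM).symm
      rw [e0, lintegral_union measurableSet_Ioi (Ioc_disjoint_Ioi le_rfl),
        e1, lintegral_union measurableSet_Ioc (Ioc_disjoint_Ioc_of_le le_rfl),
        e2, lintegral_union measurableSet_Ioc (Ioc_disjoint_Ioc_of_le le_rfl)]
      calc _ ≤ (ENNReal.ofReal (s * K) + (ENNReal.ofReal (s * (M * P * M))
            + ENNReal.ofReal (s * (A₁ + c) * (T ^ (1 - β) / (1 - β)))))
            + ENNReal.ofReal (2 * (A₁ + c) * (T ^ (-β) / β)) :=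
          add_le_add (add_le_add hL1 (add_le_add hL2 hL3)) hL4
      _ = ENNReal.ofReal R := by
          rw [← ENNReal.ofReal_add hq2 hq3, ← ENNReal.ofReal_add hq1 (add_nonneg hq2 hq3),
            ← ENNReal.ofReal_add (by linarith) hq4]
          exact congrArg ENNReal.ofReal (by rw [hR_def]; ring)
    have hnormint : ‖∫ r in Ioi (0:ℝ),
        (1 - Complex.exp (-(z * (r:ℂ)))) * ((π (Ioi r)).toReal : ℂ)‖ ≤ R :=
      (norm_integral_le_lintegral_norm _).trans (ENNReal.toReal_le_of_le_ofReal hR0 hLtot)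
    -- final real arithmetic
    have hp1 : s ^ (1 + β) = s * s ^ β := by rw [Real.rpow_add hs, Real.rpow_one]
    have hp2 : s * s ^ (β - 1) = s ^ β := by
      nth_rewrite 1 [← Real.rpow_one s]
      rw [← Real.rpow_add hs]
      congr 1; ring
    have hseq : s ^ (2:ℝ) = s ^ (2:ℕ) := by
      rw [show (2:ℝ) = ((2:ℕ):ℝ) by norm_num, Real.rpow_natCast]
    have hp4 : s ^ (1 + β) ≤ s ^ 2 + s ^ (1 + η) := by
      rcases le_total s 1 with h | h
      · have h1 : s ^ (1 + β) ≤ s ^ (1 + η) :=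
          Real.rpow_le_rpow_of_exponent_ge hs h (by linarith)
        have hw := sq_nonneg s
        linarith
      · have h2 : s ^ (1 + β) ≤ s ^ (2:ℝ) :=
          Real.rpow_le_rpow_of_exponent_le h (by linarith)
        have h4 : 0 ≤ s ^ (1 + η) := Real.rpow_nonneg hs.le _
        rw [hseq] at h2
        linarith
    have hT13 : T ^ (1 - β) ≤ M ^ (1 - β) + s ^ (β - 1) := by
      rcases max_choice M (1 / s) with h | h
      · rw [hT_def, h]
        exact le_add_of_nonneg_right (Real.rpow_nonneg hs.le _)
      · rw [hT_def, h]
        have he : (1 / s) ^ (1 - β) = s ^ (β - 1) := by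
          rw [one_div, Real.inv_rpow hs.le, ← Real.rpow_neg hs.le]
          congr 1; ring
        rw [he]
        exact le_add_of_nonneg_left hMβ
    have hT14 : T ^ (-β) ≤ s ^ β := by
      have h0 : 0 < 1 / s := by positivity
      have h1 := Real.rpow_le_rpow_of_nonpos h0 hTs (by linarith : -β ≤ 0)
      have he : (1 / s) ^ (-β) = s ^ β := by
        rw [one_div, Real.inv_rpow hs.le, Real.rpow_neg hs.le, inv_inv]
      linarith [he ▸ h1]
    have g3 : s * (s * (A₁ + c) * (T ^ (1 - β) / (1 - β)))
        ≤ (A₁ + c) / (1 - β) * (M ^ (1 - β) * s ^ 2) + (A₁ + c) / (1 - β) * s ^ (1 + β) := by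
      have e : s * (s * (A₁ + c) * (T ^ (1 - β) / (1 - β)))
          = (A₁ + c) / (1 - β) * (s * s * T ^ (1 - β)) := by ring
      have f : s * s * T ^ (1 - β) ≤ M ^ (1 - β) * s ^ 2 + s * (s * s ^ (β - 1)) := by
        calc s * s * T ^ (1 - β) ≤ s * s * (M ^ (1 - β) + s ^ (β - 1)) :=
            mul_le_mul_of_nonneg_left hT13 (mul_nonneg hs.le hs.le)
          _ = M ^ (1 - β) * s ^ 2 + s * (s * s ^ (β - 1)) := by rw [pow_two]; ring
      rw [hp2, ← hp1] at f
      rw [e]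
      calc (A₁ + c) / (1 - β) * (s * s * T ^ (1 - β))
          ≤ (A₁ + c) / (1 - β) * (M ^ (1 - β) * s ^ 2 + s ^ (1 + β)) :=
            mul_le_mul_of_nonneg_left f hdiv1
        _ = _ := by ring
    have g4 : s * (2 * (A₁ + c) * (T ^ (-β) / β)) ≤ 2 * (A₁ + c) / β * s ^ (1 + β) := by
      have e : s * (2 * (A₁ + c) * (T ^ (-β) / β)) = 2 * (A₁ + c) / β * (s * T ^ (-β)) := by
        ring
      have f : s * T ^ (-β) ≤ s ^ (1 + β) := by
        rw [hp1]
        exact mul_le_mul_of_nonneg_left hT14 hs.le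
      rw [e]
      exact mul_le_mul_of_nonneg_left f hdiv2
    calc ‖ψ₀ z‖ = ‖(b:ℂ) * z ^ 2 + z * ∫ r in Ioi (0:ℝ),
          (1 - Complex.exp (-(z * (r:ℂ)))) * ((π (Ioi r)).toReal : ℂ)‖ := by rw [hψ₀ z hz]
      _ ≤ ‖(b:ℂ) * z ^ 2‖ + ‖z * ∫ r in Ioi (0:ℝ),
          (1 - Complex.exp (-(z * (r:ℂ)))) * ((π (Ioi r)).toReal : ℂ)‖ := norm_add_le _ _
      _ = b * s ^ 2 + s * ‖∫ r in Ioi (0:ℝ),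
          (1 - Complex.exp (-(z * (r:ℂ)))) * ((π (Ioi r)).toReal : ℂ)‖ := by
          rw [norm_mul, norm_mul, norm_pow, Complex.norm_real, Real.norm_of_nonneg hb]
      _ ≤ b * s ^ 2 + s * R :=
          add_le_add_right (mul_le_mul_of_nonneg_left hnormint hs.le) _
      _ ≤ C * (s ^ 2 + s ^ (1 + η)) := by
          have hw : (0:ℝ) ≤ s ^ 2 := sq_nonneg s
          have hv : (0:ℝ) ≤ s ^ (1 + η) := Real.rpow_nonneg hs.le _
          have e5 : s * R = s * (s * K) + s * (s * (M * P * M))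
              + s * (s * (A₁ + c) * (T ^ (1 - β) / (1 - β)))
              + s * (2 * (A₁ + c) * (T ^ (-β) / β)) := by rw [hR_def]; ring
          have t1 : s * (s * K) = K * s ^ 2 := by rw [pow_two]; ring
          have t2 : s * (s * (M * P * M)) = (M * P * M) * s ^ 2 := by rw [pow_two]; ring
          have key1 : (A₁ + c) / (1 - β) * s ^ (1 + β)
              ≤ (A₁ + c) / (1 - β) * (s ^ 2 + s ^ (1 + η)) :=
            mul_le_mul_of_nonneg_left hp4 hdiv1
          have key2 : 2 * (A₁ + c) / β * s ^ (1 + β)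
              ≤ 2 * (A₁ + c) / β * (s ^ 2 + s ^ (1 + η)) :=
            mul_le_mul_of_nonneg_left hp4 hdiv2
          have key3 : (b + K + M * P * M + (A₁ + c) * M ^ (1 - β) / (1 - β)) * s ^ 2
              ≤ (b + K + M * P * M + (A₁ + c) * M ^ (1 - β) / (1 - β))
                * (s ^ 2 + s ^ (1 + η)) :=
            mul_le_mul_of_nonneg_left (le_add_of_nonneg_right hv) (by linarith)
          have key4 : (0:ℝ) ≤ s ^ 2 + s ^ (1 + η) := add_nonneg hw hv
          have l1 : b * s ^ 2 + s * R
              ≤ (b + K + M * P * M + (A₁ + c) * M ^ (1 - β) / (1 - β)) * s ^ 2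
                + (A₁ + c) / (1 - β) * s ^ (1 + β) + 2 * (A₁ + c) / β * s ^ (1 + β) := by
            rw [e5]; ring_nf; ring_nf at g3 g4; linarith only [g3, g4]
          have l2 : (A₁ + c) / (1 - β) * s ^ (1 + β) + 2 * (A₁ + c) / β * s ^ (1 + β)
              ≤ ((A₁ + c) / (1 - β) + 2 * (A₁ + c) / β) * (s ^ 2 + s ^ (1 + η)) := by
            ring_nf; ring_nf at key1 key2; linarith only [key1, key2]
          rw [hC_def]
          linarith only [key3, key4, l1, l2]
end
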